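/- Let A be the n × n tridiagonal matrix over a commutative ring with a_{i,j} = 1 if |i - j| = 1 and 0 otherwise, with n = 2^m - 1. Then the (x, y) entry of A^k, reduced mod 2, is 0 for all k ≥ n and all x, y. -/

import Mathlib

open Polynomial

noncomputable def fib2 : ℕ → Polynomial (ZMod 2)
  | 0 => 0
  | 1 => 1
  | (n+2) => X * fib2 (n+1) + fib2 n

lemma fib2_rec (i : ℕ) : fib2 (i+2) = X * fib2 (i+1) + fib2 i := rfl

lemma two_eq_zero' : (2 : Polynomial (ZMod 2)) = 0 := CharTwo.two_eq_zero

lemma fib2_add (a b : ℕ) : fib2 (a + b + 1) = fib2 (a+1) * fib2 (b+1) + fib2 a * fib2 b := by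
  induction b using Nat.twoStepInduction with
  | zero => simp [fib2]
  | one =>
    show fib2 (a + 2) = _
    rw [fib2_rec a, show fib2 2 = X * fib2 1 + fib2 0 from rfl]
    simp [fib2]; ring
  | more b ih1 ih2 =>
    have h1 : a + (b + 2) + 1 = (a + b + 1) + 2 := by ring
    rw [h1, fib2_rec, show a + b + 1 + 1 = a + (b+1) + 1 by ring, ih2, ih1,
      fib2_rec (b+1), fib2_rec b]
    ring

lemma fib2_two_mul (c : ℕ) : fib2 (2 * c) = X * (fib2 c)^2 := by
  cases c with
  | zero => simp [fib2]
  | succ c =>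
    have h : 2 * (c + 1) = (c+1) + c + 1 := by ring
    rw [h, fib2_add, fib2_rec c]
    linear_combination (fib2 c * fib2 (c+1)) * two_eq_zero'

lemma fib2_pow (m : ℕ) : fib2 (2^m) = X ^ (2^m - 1) := by
  induction m with
  | zero => simp [fib2]
  | succ m ih =>
    have h1 : (1:ℕ) ≤ 2 ^ m := Nat.one_le_two_pow
    rw [pow_succ, mul_comm (2^m) 2, fib2_two_mul, ih, ← pow_mul, ← pow_succ']
    congr 1
    omega

lemma fib2_natDegree_le (i : ℕ) : (fib2 (i+1)).natDegree ≤ i ∧ (fib2 (i+1)).coeff i = 1 := by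
  induction i using Nat.twoStepInduction with
  | zero => simp [fib2]
  | one =>
    constructor
    · rw [show fib2 2 = X * fib2 1 + fib2 0 from rfl]
      simp [fib2, natDegree_X_le]
    · rw [show fib2 2 = X * fib2 1 + fib2 0 from rfl]
      simp [fib2]
  | more i ih1 ih2 =>
    rw [fib2_rec (i+1)]
    constructor
    · refine le_trans (natDegree_add_le _ _) ?_
      refine max_le (le_trans (natDegree_mul_le) ?_) (le_trans ih1.1 (by omega))
      have := natDegree_X_le (R := ZMod 2)
      omega
    · rw [coeff_add, coeff_X_mul, ih2.2,
        coeff_eq_zero_of_natDegree_lt (lt_of_le_of_lt ih1.1 (by omega))]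
      simp

noncomputable def Phi (n : ℕ) (w : Fin n → ZMod 2) : Polynomial (ZMod 2) :=
  ∑ i : Fin n, w i • fib2 (i.val + 1)

lemma Phi_coeff (n : ℕ) (w : Fin n → ZMod 2) (d : ℕ) :
    (Phi n w).coeff d = ∑ i : Fin n, w i * (fib2 (i.val+1)).coeff d := by
  rw [Phi, finset_sum_coeff]
  simp [coeff_smul, smul_eq_mul]

lemma Phi_coeff_eq_zero (n : ℕ) (w : Fin n → ZMod 2) (d : ℕ) (hd : n ≤ d) :
    (Phi n w).coeff d = 0 := by
  rw [Phi_coeff]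
  refine Finset.sum_eq_zero fun i _ => ?_
  rw [coeff_eq_zero_of_natDegree_lt (lt_of_le_of_lt (fib2_natDegree_le i.val).1 (by omega))]
  simp

lemma Phi_inj (n : ℕ) (w : Fin n → ZMod 2) (h : Phi n w = 0) : w = 0 := by
  induction n with
  | zero => funext i; exact absurd i.2 (by omega)
  | succ n ih =>
    have hsum : Phi (n+1) w
        = Phi n (fun i => w i.castSucc) + w (Fin.last n) • fib2 (n+1) := by
      rw [Phi, Fin.sum_univ_castSucc]; rfl
    have hlast : w (Fin.last n) = 0 := by
      have := congrArg (fun p => p.coeff n) h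
      simp only [hsum, coeff_add, coeff_smul, coeff_zero] at this
      rw [Phi_coeff_eq_zero n _ n le_rfl, (fib2_natDegree_le n).2] at this
      simpa using this
    have h0 : Phi n (fun i => w i.castSucc) = 0 := by
      rw [hsum, hlast] at h; simpa using h
    have := ih _ h0
    funext i
    rcases Fin.eq_castSucc_or_eq_last i with ⟨j, rfl⟩ | rfl
    · exact congrFun this j
    · exact hlast

lemma sum_single (n c : ℕ) :
    (∑ i : Fin n, (if i.val = c then (1:ZMod 2) else 0) • fib2 (i.val+1))
      = if c < n then fib2 (c+1) else 0 := by
  rw [Fin.sum_univ_eq_sum_range (fun i => (if i = c then (1:ZMod 2) else 0) • fib2 (i+1))]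
  simp only [ite_smul, one_smul, zero_smul]
  rw [Finset.sum_ite_eq' (Finset.range n) c (fun i => fib2 (i+1))]
  simp [Finset.mem_range]

section Key
variable (m n : ℕ) (hm : 0 < m) (hn : n = 2 ^ m - 1)
  (B : Matrix (Fin n) (Fin n) (ZMod 2))
  (hB : ∀ i j, B i j = if ((i : ℤ) - (j : ℤ)).natAbs = 1 then 1 else 0)

include hn hB

lemma sum_col (j : Fin n) :
    (∑ i : Fin n, B i j • fib2 (i.val+1))
      = X * fib2 (j.val + 1)
        + (if j.val + 1 < n then 0 else (X:Polynomial (ZMod 2))^n) := by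
  have hsplit : ∀ i : Fin n, B i j • fib2 (i.val+1)
      = (if i.val + 1 = j.val then (1:ZMod 2) else 0) • fib2 (i.val+1)
        + (if i.val = j.val + 1 then (1:ZMod 2) else 0) • fib2 (i.val+1) := by
    intro i
    rw [hB]
    rcases Nat.lt_trichotomy i.val j.val with h | h | h
    · by_cases h1 : i.val + 1 = j.val
      · rw [if_pos (by omega), if_pos h1, if_neg (by omega)]; simp
      · rw [if_neg (by omega), if_neg h1, if_neg (by omega)]; simp
    · rw [if_neg (by omega), if_neg (by omega), if_neg (by omega)]; simp
    · by_cases h1 : i.val = j.val + 1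
      · rw [if_pos (by omega), if_neg (by omega), if_pos h1]; simp
      · rw [if_neg (by omega), if_neg (by omega), if_neg h1]; simp
  rw [Finset.sum_congr rfl (fun i _ => hsplit i), Finset.sum_add_distrib]
  have e1 : (∑ i : Fin n, (if i.val + 1 = j.val then (1:ZMod 2) else 0) • fib2 (i.val+1))
      = fib2 j.val := by
    rcases Nat.eq_zero_or_pos j.val with h0 | h0
    · rw [h0]
      rw [show fib2 0 = 0 from rfl]
      refine Finset.sum_eq_zero fun i _ => ?_
      rw [if_neg (by omega)]; simp
    · obtain ⟨c, hc⟩ : ∃ c, j.val = c + 1 := ⟨j.val - 1, by omega⟩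
      have : ∀ i : Fin n, (if i.val + 1 = j.val then (1:ZMod 2) else 0)
          = (if i.val = c then (1:ZMod 2) else 0) := by
        intro i; by_cases h : i.val = c
        · rw [if_pos h, if_pos (by omega)]
        · rw [if_neg h, if_neg (by omega)]
      simp_rw [this]
      rw [sum_single n c, if_pos (by omega), hc]
  have e2 : (∑ i : Fin n, (if i.val = j.val + 1 then (1:ZMod 2) else 0) • fib2 (i.val+1))
      = if j.val + 1 < n then fib2 (j.val+2) else 0 := sum_single n (j.val+1)
  rw [e1, e2]
  by_cases h : j.val + 1 < n
  · rw [if_pos h, if_pos h, add_zero, fib2_rec]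
    have : fib2 j.val + fib2 j.val = 0 := CharTwo.add_self_eq_zero _
    linear_combination this
  · rw [if_neg h, if_neg h, add_zero]
    have hjn : j.val + 1 = n := by have := j.2; omega
    have hXn : fib2 (n+1) = (X:Polynomial (ZMod 2))^n := by
      have h1 : (1:ℕ) ≤ 2 ^ m := Nat.one_le_two_pow
      rw [show n + 1 = 2^m by omega, fib2_pow, show 2^m - 1 = n by omega]
    have hr : fib2 (j.val + 2) = X * fib2 (j.val+1) + fib2 j.val := fib2_rec _
    rw [show j.val + 2 = n + 1 by omega, hXn] at hr
    have : fib2 j.val + fib2 j.val = 0 := CharTwo.add_self_eq_zero _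
    linear_combination -hr - (X * fib2 (j.val+1)) * two_eq_zero'

lemma Phi_mulVec (w : Fin n → ZMod 2) :
    ∃ c : ZMod 2, Phi n (B.mulVec w) = X * Phi n w + c • (X:Polynomial (ZMod 2))^n := by
  refine ⟨∑ j : Fin n, (if j.val + 1 < n then 0 else w j), ?_⟩
  have step1 : Phi n (B.mulVec w)
      = ∑ j : Fin n, w j • (∑ i : Fin n, B i j • fib2 (i.val+1)) := by
    rw [Phi]
    simp_rw [Matrix.mulVec, dotProduct, Finset.sum_smul, Finset.smul_sum, smul_smul]
    rw [Finset.sum_comm]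
    refine Finset.sum_congr rfl fun j _ => Finset.sum_congr rfl fun i _ => ?_
    rw [mul_comm]
  rw [step1]
  have step2 : ∀ j : Fin n, w j • (∑ i : Fin n, B i j • fib2 (i.val+1))
      = X * (w j • fib2 (j.val+1))
        + (if j.val + 1 < n then 0 else w j) • (X:Polynomial (ZMod 2))^n := by
    intro j
    rw [sum_col m n hn B hB j, smul_add, mul_smul_comm]
    congr 1
    split
    · simp
    · rfl
  rw [Finset.sum_congr rfl (fun j _ => step2 j), Finset.sum_add_distrib,
    ← Finset.mul_sum, ← Finset.sum_smul]
  rfl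

lemma pow_mulVec (k : ℕ) (w : Fin n → ZMod 2) :
    ∃ g, Phi n ((B^k).mulVec w) = X^k * Phi n w + X^n * g := by
  induction k with
  | zero => exact ⟨0, by simp⟩
  | succ k ih =>
    obtain ⟨g, hg⟩ := ih
    have h1 : (B^(k+1)).mulVec w = B.mulVec ((B^k).mulVec w) := by
      rw [pow_succ', ← Matrix.mulVec_mulVec]
    obtain ⟨c, hc⟩ := Phi_mulVec m n hn B hB ((B^k).mulVec w)
    refine ⟨X * g + C c, ?_⟩
    rw [h1, hc, hg, smul_eq_C_mul]
    ring

lemma key_zmod (k : ℕ) (hk : n ≤ k) (x y : Fin n) : (B ^ k) x y = 0 := by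
  obtain ⟨g, hg⟩ := pow_mulVec m n hn B hB k (Pi.single y 1)
  have hPs : Phi n (Pi.single y 1) = fib2 (y.val + 1) := by
    rw [Phi, Finset.sum_eq_single y]
    · simp
    · intro i _ hiy
      rw [Pi.single_eq_of_ne hiy]
      simp
    · intro hy
      exact absurd (Finset.mem_univ y) hy
  have hzero : Phi n ((B^k).mulVec (Pi.single y 1)) = 0 := by
    refine Polynomial.ext fun d => ?_
    rw [coeff_zero]
    rcases lt_or_ge d n with hd | hd
    · rw [hg, hPs, coeff_add, mul_comm ((X:Polynomial (ZMod 2))^k),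
        mul_comm ((X:Polynomial (ZMod 2))^n), coeff_mul_X_pow', coeff_mul_X_pow',
        if_neg (by omega), if_neg (by omega), add_zero]
    · exact Phi_coeff_eq_zero n _ d hd
  have hv := Phi_inj n _ hzero
  have := congrFun hv x
  simp only [Matrix.mulVec, dotProduct, Pi.zero_apply] at this
  rw [Finset.sum_eq_single y] at this
  · simpa using this
  · intro i _ hiy
    rw [Pi.single_eq_of_ne hiy]
    simp
  · intro hy
    exact absurd (Finset.mem_univ y) hy

end Key

/-- Let `A` be the `n × n` tridiagonal 0/1 matrix over a commutative ring `R`, with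
`n = 2^m - 1`. For `k ≥ n`, every entry of `A ^ k` reduces to zero mod 2, i.e. lies in
the ideal generated by `2`. -/
theorem pathGraph_adjMatrix_pow_entry_mem_span_two
    (R : Type*) [CommRing R] (m : ℕ) (hm : 0 < m) (n : ℕ) (hn : n = 2 ^ m - 1)
    (A : Matrix (Fin n) (Fin n) R)
    (hA : ∀ i j, A i j = if ((i : ℤ) - (j : ℤ)).natAbs = 1 then 1 else 0)
    (k : ℕ) (hk : n ≤ k) (x y : Fin n) :
    (A ^ k) x y ∈ Ideal.span {(2 : R)} := by
  classical
  set Bz : Matrix (Fin n) (Fin n) ℤ :=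
    fun i j => if ((i : ℤ) - (j : ℤ)).natAbs = 1 then 1 else 0 with hBz
  have hAB : A = (Int.castRingHom R).mapMatrix Bz := by
    ext i j
    rw [hA]
    simp only [RingHom.mapMatrix_apply, Matrix.map_apply]
    rw [hBz]
    split <;> simp [*]
  have hApow : (A ^ k) x y = (((Bz ^ k) x y : ℤ) : R) := by
    rw [hAB, ← map_pow]
    rfl
  set B2 : Matrix (Fin n) (Fin n) (ZMod 2) := (Int.castRingHom (ZMod 2)).mapMatrix Bz with hB2
  have hB2' : ∀ i j, B2 i j = if ((i : ℤ) - (j : ℤ)).natAbs = 1 then 1 else 0 := by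
    intro i j
    simp only [hB2, RingHom.mapMatrix_apply, Matrix.map_apply]
    rw [hBz]
    split <;> simp [*]
  have hkey : (B2 ^ k) x y = 0 := key_zmod m n hn B2 hB2' k hk x y
  have hcast : (((Bz ^ k) x y : ℤ) : ZMod 2) = 0 := by
    rw [← hkey, hB2, ← map_pow]
    rfl
  have hdvd : (2 : ℤ) ∣ (Bz ^ k) x y := by
    have := (ZMod.intCast_zmod_eq_zero_iff_dvd ((Bz ^ k) x y) 2).mp hcast
    exact_mod_cast this
  obtain ⟨t, ht⟩ := hdvd
  rw [hApow, ht]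
  refine Ideal.mem_span_singleton'.mpr ⟨(t : R), ?_⟩
  push_cast
  ring
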